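/- Let k be a field, p a prime, 0 ≤ h, and d an integer with p^h < d < p^{h+1}. Write E_j = k[X]/(X^j). Then the sequence 0 → E_{p^h+p^{h+1}−d} → E_{p^h} × E_{p^{h+1}} → E_d → 0 is a short exact sequence of k[X]-modules, where the first map is induced by T ↦ (−T, X^{d−p^h}·T) and the second map is e_d, induced by (Q,R) ↦ X^{d−p^h}·Q + R. That is: the first map is injective, its range equals the kernel of e_d, and e_d is surjective. -/

import Mathlib

open Polynomial

/-- `Emod k j` is the `k[X]`-module `k[X]/(X^j)`. -/
abbrev Emod (k : Type*) [Field k] (j : ℕ) :=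
  Polynomial k ⧸ Ideal.span {(X : Polynomial k) ^ j}

/-- The `k[X]`-linear map `k[X]/(X^a) → k[X]/(X^d)` induced by multiplication
by `X^t`, well defined when `d ≤ t + a`. -/
noncomputable def shiftMap (k : Type*) [Field k] (a d t : ℕ) (hle : d ≤ t + a) :
    Emod k a →ₗ[Polynomial k] Emod k d :=
  Submodule.mapQ (Ideal.span {(X : Polynomial k) ^ a}) (Ideal.span {(X : Polynomial k) ^ d})
    (LinearMap.lsmul (Polynomial k) (Polynomial k) (X ^ t))
    (by
      refine Submodule.span_le.2 ?_
      simp only [Set.singleton_subset_iff, SetLike.mem_coe, Submodule.mem_comap,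
        LinearMap.lsmul_apply, smul_eq_mul, Ideal.submodule_span_eq, Ideal.mem_span_singleton,
        ← pow_add]
      exact pow_dvd_pow _ hle)

/-- The `k[X]`-linear map `e_d : k[X]/(X^a) × k[X]/(X^b) → k[X]/(X^d)` induced by
`(Q, R) ↦ X^(d-a)·Q + R`, for `a ≤ d ≤ b`. -/
noncomputable def eD (k : Type*) [Field k] (a b d : ℕ) (h1 : a ≤ d) (h2 : d ≤ b) :
    Emod k a × Emod k b →ₗ[Polynomial k] Emod k d :=
  (shiftMap k a d (d - a) (by omega)).coprod (shiftMap k b d 0 (by omega))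

/-- The `k[X]`-linear map `k[X]/(X^(a+b-d)) → k[X]/(X^a) × k[X]/(X^b)` induced by
`T ↦ (−T, X^(d−a)·T)`, for `a ≤ d ≤ b`. -/
noncomputable def iotaMap (k : Type*) [Field k] (a b d : ℕ) (h1 : a ≤ d) (h2 : d ≤ b) :
    Emod k (a + b - d) →ₗ[Polynomial k] Emod k a × Emod k b :=
  (-(shiftMap k (a + b - d) a 0 (by omega))).prod (shiftMap k (a + b - d) b (d - a) (by omega))

lemma shiftMap_mk (k : Type*) [Field k] (a d t : ℕ) (hle : d ≤ t + a) (P : Polynomial k) :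
    shiftMap k a d t hle (Submodule.Quotient.mk P) = Submodule.Quotient.mk (X ^ t * P) := by
  rw [shiftMap, Submodule.mapQ_apply, LinearMap.lsmul_apply, smul_eq_mul]

lemma mk_eq_zero_iff (k : Type*) [Field k] (j : ℕ) (P : Polynomial k) :
    (Submodule.Quotient.mk P : Emod k j) = 0 ↔ (X : Polynomial k) ^ j ∣ P := by
  rw [Submodule.Quotient.mk_eq_zero]
  exact Ideal.mem_span_singleton

theorem aux_shortExact (k : Type*) [Field k] (a b d : ℕ) (h1 : a ≤ d) (h2 : d ≤ b) :
    Function.Injective (iotaMap k a b d h1 h2) ∧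
    LinearMap.range (iotaMap k a b d h1 h2) = LinearMap.ker (eD k a b d h1 h2) ∧
    Function.Surjective (eD k a b d h1 h2) := by
  refine ⟨?_, ?_, ?_⟩
  · rw [← LinearMap.ker_eq_bot, LinearMap.ker_eq_bot']
    intro T hT
    obtain ⟨P, rfl⟩ := Submodule.Quotient.mk_surjective _ T
    have h2' := congrArg Prod.snd hT
    simp only [iotaMap, LinearMap.prod_apply, Function.prod, Prod.snd_zero] at h2'
    rw [shiftMap_mk, mk_eq_zero_iff] at h2'
    rw [show b = (d - a) + (a + b - d) by omega, pow_add] at h2'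
    have : (X : Polynomial k) ^ (a + b - d) ∣ P :=
      (mul_dvd_mul_iff_left (pow_ne_zero _ (X_ne_zero))).mp h2'
    rw [mk_eq_zero_iff]
    exact this
  · apply le_antisymm
    · rintro _ ⟨T, rfl⟩
      obtain ⟨P, rfl⟩ := Submodule.Quotient.mk_surjective _ T
      simp only [LinearMap.mem_ker, iotaMap, eD, LinearMap.prod_apply, Function.prod,
        LinearMap.coprod_apply, LinearMap.neg_apply, shiftMap_mk, map_neg, pow_zero, one_mul]
      exact neg_add_cancel _
    · rintro ⟨q, r⟩ hmem
      obtain ⟨Q, rfl⟩ := Submodule.Quotient.mk_surjective _ q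
      obtain ⟨R, rfl⟩ := Submodule.Quotient.mk_surjective _ r
      rw [LinearMap.mem_ker] at hmem
      simp only [eD, LinearMap.coprod_apply, shiftMap_mk, pow_zero, one_mul] at hmem
      rw [← Submodule.Quotient.mk_add, mk_eq_zero_iff] at hmem
      obtain ⟨S, hS⟩ := hmem
      refine ⟨Submodule.Quotient.mk (-Q + X ^ a * S), ?_⟩
      simp only [iotaMap, LinearMap.prod_apply, Function.prod, LinearMap.neg_apply, shiftMap_mk,
        pow_zero, one_mul]
      refine Prod.ext ?_ ?_
      · show -(Submodule.Quotient.mk (-Q + X ^ a * S)) = _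
        rw [← Submodule.Quotient.mk_neg, Submodule.Quotient.eq]
        exact Ideal.mem_span_singleton.mpr ⟨-S, by ring⟩
      · show (Submodule.Quotient.mk (X ^ (d - a) * (-Q + X ^ a * S)) : Emod k b) = _
        congr 1
        have hda : X ^ (d - a) * X ^ a = (X : Polynomial k) ^ d := by
          rw [← pow_add]; congr 1; omega
        rw [mul_add, mul_neg, ← mul_assoc, hda]
        linear_combination -hS
  · intro y
    obtain ⟨R, rfl⟩ := Submodule.Quotient.mk_surjective _ y
    refine ⟨(0, Submodule.Quotient.mk R), ?_⟩
    simp only [eD, LinearMap.coprod_apply, map_zero, shiftMap_mk, pow_zero, one_mul, zero_add]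


/-- For `p^h < d < p^(h+1)` the sequence
`0 → E_{p^h + p^(h+1) − d} → E_{p^h} × E_{p^(h+1)} → E_d → 0`, with first map
`T ↦ (−T, X^(d−p^h)·T)` and second map `e_d : (Q,R) ↦ X^(d−p^h)·Q + R`, is a short
exact sequence of `k[X]`-modules. -/
theorem iotaMap_eD_shortExact (k : Type*) [Field k] (p h d : ℕ) (hp : p.Prime)
    (hd1 : p ^ h < d) (hd2 : d < p ^ (h + 1)) :
    Function.Injective (iotaMap k (p ^ h) (p ^ (h + 1)) d hd1.le hd2.le) ∧
    LinearMap.range (iotaMap k (p ^ h) (p ^ (h + 1)) d hd1.le hd2.le) =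
      LinearMap.ker (eD k (p ^ h) (p ^ (h + 1)) d hd1.le hd2.le) ∧
    Function.Surjective (eD k (p ^ h) (p ^ (h + 1)) d hd1.le hd2.le) := by
  exact aux_shortExact k (p ^ h) (p ^ (h + 1)) d hd1.le hd2.le
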